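/- Let M ≥ 2 and let Y₁, …, Y_M be independent, identically distributed real random variables whose common law μ is atomless, has cumulative distribution function F, finite first moment, and is such that x ↦ x·F(x) is μ-integrable, and let y ∈ ℝ. Define h̃(a, b) := (1/2)·( a·1_{a > b} + b·1_{b > a} ) and the estimator Ŝ := (1/M)·Σ_{i=1}^M |Y_i − y| + (1/M)·Σ_{i=1}^M Y_i − (2/(M·(M−1)))·Σ_{i ≠ j} h̃(Y_i, Y_j). Then E[Ŝ] = CRPS(F, y); i.e., the U-statistic PWM estimator of the CRPS is unbiased. -/

import Mathlib

open MeasureTheory Set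

section Helpers
variable {μ ν : Measure ℝ} [IsProbabilityMeasure μ] [IsProbabilityMeasure ν]

set_option linter.unusedSectionVars false

lemma int_ind {S : Set ℝ} (hS : MeasurableSet S) :
    ∫ u, S.indicator (1 : ℝ → ℝ) u ∂μ = (μ S).toReal := by
  exact integral_indicator_one hS

lemma integrable_fst' {g : ℝ → ℝ} (hg : Integrable g μ) :
    Integrable (fun p : ℝ × ℝ => g p.1) (μ.prod ν) := by
  have hmap : (μ.prod ν).map Prod.fst = μ := by
    rw [Measure.map_fst_prod]; simp
  have h : Integrable g ((μ.prod ν).map Prod.fst) := by rw [hmap]; exact hg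
  exact (integrable_map_measure (by rw [hmap]; exact hg.aestronglyMeasurable)
    measurable_fst.aemeasurable).mp h

lemma integrable_snd' {g : ℝ → ℝ} (hg : Integrable g ν) :
    Integrable (fun p : ℝ × ℝ => g p.2) (μ.prod ν) := by
  have hmap : (μ.prod ν).map Prod.snd = ν := by
    rw [Measure.map_snd_prod]; simp
  have h : Integrable g ((μ.prod ν).map Prod.snd) := by rw [hmap]; exact hg
  exact (integrable_map_measure (by rw [hmap]; exact hg.aestronglyMeasurable)
    measurable_snd.aemeasurable).mp h

end Helpers

section T
variable {μ : Measure ℝ} [IsProbabilityMeasure μ] {F : ℝ → ℝ}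

lemma F_Iio (hAtomless : ∀ x : ℝ, μ {x} = 0) (hF : ∀ t, F t = (μ (Set.Iic t)).toReal)
    (s : ℝ) : (μ (Set.Iio s)).toReal = F s := by
  rw [hF]
  congr 1
  have : Set.Iic s = Set.Iio s ∪ {s} := by ext x; simp [le_iff_lt_or_eq]
  rw [this, measure_union (by simp) (measurableSet_singleton s), hAtomless, add_zero]

lemma F_Ioi (hAtomless : ∀ x : ℝ, μ {x} = 0) (hF : ∀ t, F t = (μ (Set.Iic t)).toReal)
    (s : ℝ) : (μ (Set.Ioi s)).toReal = 1 - F s := by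
  rw [hF]
  rw [show Set.Ioi s = (Set.Iic s)ᶜ from by ext x; simp]
  rw [measure_compl measurableSet_Iic (measure_ne_top μ _), measure_univ,
    ENNReal.toReal_sub_of_le (by exact prob_le_one) (by simp), ENNReal.toReal_one]

lemma meas_ind_lt : Measurable (fun p : ℝ × ℝ => if p.2 < p.1 then (1:ℝ) else 0) :=
  Measurable.ite (measurableSet_lt measurable_snd measurable_fst) measurable_const
    measurable_const

lemma intble_T1 (hInt : Integrable id μ) :
    Integrable (fun p : ℝ × ℝ => p.1 * (if p.2 < p.1 then (1:ℝ) else 0)) (μ.prod μ) := by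
  apply Integrable.mono' (integrable_fst' (ν := μ) hInt.abs)
  · exact (measurable_fst.mul meas_ind_lt).aestronglyMeasurable
  · filter_upwards with p
    simp only [Real.norm_eq_abs, abs_mul, id]
    split_ifs <;> simp [abs_nonneg]

lemma intble_T2 (hInt : Integrable id μ) :
    Integrable (fun p : ℝ × ℝ => p.2 * (if p.2 < p.1 then (1:ℝ) else 0)) (μ.prod μ) := by
  apply Integrable.mono' (integrable_snd' (μ := μ) hInt.abs)
  · exact (measurable_snd.mul meas_ind_lt).aestronglyMeasurable
  · filter_upwards with p
    simp only [Real.norm_eq_abs, abs_mul, id]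
    split_ifs <;> simp [abs_nonneg]

lemma T1 (hAtomless : ∀ x : ℝ, μ {x} = 0) (hF : ∀ t, F t = (μ (Set.Iic t)).toReal)
    (hInt : Integrable id μ) :
    ∫ p : ℝ × ℝ, p.1 * (if p.2 < p.1 then (1:ℝ) else 0) ∂(μ.prod μ)
      = ∫ x, x * F x ∂μ := by
  rw [MeasureTheory.integral_prod _ (intble_T1 hInt)]
  congr 1; funext s
  rw [integral_const_mul]
  have h1 : (fun u => if u < s then (1:ℝ) else 0) = (Set.Iio s).indicator (1 : ℝ → ℝ) := by
    funext u; simp [Set.indicator_apply]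
  simp only [h1]
  rw [int_ind measurableSet_Iio, F_Iio hAtomless hF]

lemma T2 (hAtomless : ∀ x : ℝ, μ {x} = 0) (hF : ∀ t, F t = (μ (Set.Iic t)).toReal)
    (hInt : Integrable id μ) (hInt2 : Integrable (fun x => x * F x) μ) :
    ∫ p : ℝ × ℝ, p.2 * (if p.2 < p.1 then (1:ℝ) else 0) ∂(μ.prod μ)
      = (∫ x, x ∂μ) - ∫ x, x * F x ∂μ := by
  rw [MeasureTheory.integral_prod_symm _ (intble_T2 hInt)]
  have h1 : ∀ u : ℝ, ∫ s, u * (if u < s then (1:ℝ) else 0) ∂μ = u * (1 - F u) := by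
    intro u
    rw [integral_const_mul]
    have h2 : (fun s => if u < s then (1:ℝ) else 0) = (Set.Ioi u).indicator (1 : ℝ → ℝ) := by
      funext s; simp [Set.indicator_apply]
    simp only [h2]
    rw [int_ind measurableSet_Ioi, F_Ioi hAtomless hF]
  simp only [h1]
  have : ∀ u : ℝ, u * (1 - F u) = u - u * F u := by intro u; ring
  simp only [this]
  exact integral_sub hInt hInt2

end T

section T
variable {μ : Measure ℝ} [IsProbabilityMeasure μ] {F : ℝ → ℝ}

lemma my_swap_integral (g : ℝ × ℝ → ℝ) (hg : Measurable g) :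
    ∫ p : ℝ × ℝ, g p.swap ∂(μ.prod μ) = ∫ p : ℝ × ℝ, g p ∂(μ.prod μ) := by
  rw [← integral_map measurable_swap.aemeasurable hg.aestronglyMeasurable,
    Measure.prod_swap]

lemma meas_ind_lt' : Measurable (fun p : ℝ × ℝ => if p.1 < p.2 then (1:ℝ) else 0) :=
  Measurable.ite (measurableSet_lt measurable_fst measurable_snd) measurable_const
    measurable_const

lemma T1' (hAtomless : ∀ x : ℝ, μ {x} = 0) (hF : ∀ t, F t = (μ (Set.Iic t)).toReal)
    (hInt : Integrable id μ) :
    ∫ p : ℝ × ℝ, p.2 * (if p.1 < p.2 then (1:ℝ) else 0) ∂(μ.prod μ)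
      = ∫ x, x * F x ∂μ := by
  have := my_swap_integral (μ := μ) (fun p => p.1 * (if p.2 < p.1 then (1:ℝ) else 0))
    (measurable_fst.mul meas_ind_lt)
  simp only [Prod.fst_swap, Prod.snd_swap] at this
  rw [this, T1 hAtomless hF hInt]

lemma T2' (hAtomless : ∀ x : ℝ, μ {x} = 0) (hF : ∀ t, F t = (μ (Set.Iic t)).toReal)
    (hInt : Integrable id μ) (hInt2 : Integrable (fun x => x * F x) μ) :
    ∫ p : ℝ × ℝ, p.1 * (if p.1 < p.2 then (1:ℝ) else 0) ∂(μ.prod μ)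
      = (∫ x, x ∂μ) - ∫ x, x * F x ∂μ := by
  have := my_swap_integral (μ := μ) (fun p => p.2 * (if p.2 < p.1 then (1:ℝ) else 0))
    (measurable_snd.mul meas_ind_lt)
  simp only [Prod.fst_swap, Prod.snd_swap] at this
  rw [this, T2 hAtomless hF hInt hInt2]

lemma intble_T1' (hInt : Integrable id μ) :
    Integrable (fun p : ℝ × ℝ => p.2 * (if p.1 < p.2 then (1:ℝ) else 0)) (μ.prod μ) := by
  apply Integrable.mono' (integrable_snd' (μ := μ) hInt.abs)
  · exact (measurable_snd.mul meas_ind_lt').aestronglyMeasurable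
  · filter_upwards with p
    simp only [Real.norm_eq_abs, abs_mul, id]
    split_ifs <;> simp [abs_nonneg]

lemma intble_T2' (hInt : Integrable id μ) :
    Integrable (fun p : ℝ × ℝ => p.1 * (if p.1 < p.2 then (1:ℝ) else 0)) (μ.prod μ) := by
  apply Integrable.mono' (integrable_fst' (ν := μ) hInt.abs)
  · exact (measurable_fst.mul meas_ind_lt').aestronglyMeasurable
  · filter_upwards with p
    simp only [Real.norm_eq_abs, abs_mul, id]
    split_ifs <;> simp [abs_nonneg]

lemma ESU (hAtomless : ∀ x : ℝ, μ {x} = 0) (hF : ∀ t, F t = (μ (Set.Iic t)).toReal)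
    (hInt : Integrable id μ) (hInt2 : Integrable (fun x => x * F x) μ) :
    ∫ p : ℝ × ℝ, |p.1 - p.2| ∂(μ.prod μ)
      = 4 * (∫ x, x * F x ∂μ) - 2 * ∫ x, x ∂μ := by
  have key : ∀ p : ℝ × ℝ, |p.1 - p.2|
      = (p.1 * (if p.2 < p.1 then (1:ℝ) else 0) - p.2 * (if p.2 < p.1 then (1:ℝ) else 0))
        + (p.2 * (if p.1 < p.2 then (1:ℝ) else 0) - p.1 * (if p.1 < p.2 then (1:ℝ) else 0)) := by
    intro p
    rcases lt_trichotomy p.1 p.2 with h | h | h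
    · rw [abs_of_nonpos (by linarith), if_neg (not_lt.mpr h.le), if_pos h]; ring
    · simp [h]
    · rw [abs_of_nonneg (by linarith), if_pos h, if_neg (not_lt.mpr h.le)]; ring
  simp only [key]
  have hA : Integrable (fun p : ℝ × ℝ => p.1 * (if p.2 < p.1 then (1:ℝ) else 0)
      - p.2 * (if p.2 < p.1 then (1:ℝ) else 0)) (μ.prod μ) :=
    (intble_T1 hInt).sub (intble_T2 hInt)
  have hB : Integrable (fun p : ℝ × ℝ => p.2 * (if p.1 < p.2 then (1:ℝ) else 0)
      - p.1 * (if p.1 < p.2 then (1:ℝ) else 0)) (μ.prod μ) :=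
    (intble_T1' hInt).sub (intble_T2' hInt)
  rw [integral_add hA hB,
    integral_sub (intble_T1 hInt) (intble_T2 hInt),
    integral_sub (intble_T1' hInt) (intble_T2' hInt),
    T1 hAtomless hF hInt, T2 hAtomless hF hInt hInt2,
    T1' hAtomless hF hInt, T2' hAtomless hF hInt hInt2]
  ring

lemma htilde_int (hAtomless : ∀ x : ℝ, μ {x} = 0) (hF : ∀ t, F t = (μ (Set.Iic t)).toReal)
    (hInt : Integrable id μ) :
    ∫ p : ℝ × ℝ, (1 / 2 : ℝ) * (p.1 * (if p.2 < p.1 then (1:ℝ) else 0)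
        + p.2 * (if p.1 < p.2 then (1:ℝ) else 0)) ∂(μ.prod μ)
      = ∫ x, x * F x ∂μ := by
  rw [integral_const_mul, integral_add (intble_T1 hInt) (intble_T1' hInt),
    T1 hAtomless hF hInt, T1' hAtomless hF hInt]
  ring

lemma intble_htilde (hInt : Integrable id μ) :
    Integrable (fun p : ℝ × ℝ => (1 / 2 : ℝ) * (p.1 * (if p.2 < p.1 then (1:ℝ) else 0)
        + p.2 * (if p.1 < p.2 then (1:ℝ) else 0))) (μ.prod μ) :=
  (((intble_T1 hInt).add (intble_T1' hInt)).const_mul _)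

end T
set_option linter.unusedSectionVars false
set_option maxHeartbeats 1000000

noncomputable def kerf (y s t : ℝ) : ℝ :=
  (if s ≤ t then (1:ℝ) else 0) - (if y ≤ t then (1:ℝ) else 0)

lemma kerf_meas (y : ℝ) : Measurable (fun q : ℝ × ℝ => kerf y q.1 q.2) := by
  unfold kerf
  exact (Measurable.ite (measurableSet_le measurable_fst measurable_snd) measurable_const
    measurable_const).sub (Measurable.ite (measurableSet_le measurable_const measurable_snd)
      measurable_const measurable_const)

lemma kerf_abs_le_one (y s t : ℝ) : |kerf y s t| ≤ 1 := by
  unfold kerf; split_ifs <;> norm_num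

lemma kerf_abs_le (y s t : ℝ) : |kerf y s t| ≤ (Set.uIcc s y).indicator (1 : ℝ → ℝ) t := by
  by_cases ht : t ∈ Set.uIcc s y
  · rw [Set.indicator_of_mem ht]; exact kerf_abs_le_one y s t
  · rw [Set.indicator_of_notMem ht]
    rw [Set.mem_uIcc] at ht
    have h0 : kerf y s t = 0 := by
      unfold kerf
      rcases le_or_gt s t with h1 | h1 <;> rcases le_or_gt y t with h2 | h2
      · simp [h1, h2]
      · exact absurd (Or.inl ⟨h1, h2.le⟩) ht
      · exact absurd (Or.inr ⟨h2, h1.le⟩) ht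
      · simp [not_le.mpr h1, not_le.mpr h2]
    rw [h0]; simp

lemma kerf_prod_eq_aux (y s u : ℝ) (hsu : s ≤ u) :
    (∫ t : ℝ, kerf y s t * kerf y u t) = (|s - y| + |u - y| - |s - u|) / 2 := by
  rcases le_total u y with h | h
  · have hind : (fun t => kerf y s t * kerf y u t) = (Set.Ico u y).indicator (1 : ℝ → ℝ) := by
      funext t
      simp only [kerf, Set.indicator_apply, Set.mem_Ico, Pi.one_apply]
      split_ifs <;> simp_all <;> linarith
    rw [hind, integral_indicator_one measurableSet_Ico,
      Real.volume_real_Ico_of_le (by linarith),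
      abs_of_nonpos (by linarith), abs_of_nonpos (by linarith), abs_of_nonpos (by linarith)]
    ring
  · rcases le_total y s with h2 | h2
    · have hind : (fun t => kerf y s t * kerf y u t) = (Set.Ico y s).indicator (1 : ℝ → ℝ) := by
        funext t
        simp only [kerf, Set.indicator_apply, Set.mem_Ico, Pi.one_apply]
        split_ifs <;> simp_all <;> linarith
      rw [hind, integral_indicator_one measurableSet_Ico,
        Real.volume_real_Ico_of_le (by linarith),
        abs_of_nonneg (by linarith), abs_of_nonneg (by linarith), abs_of_nonpos (by linarith)]
      ring
    · have hind : (fun t => kerf y s t * kerf y u t) = (fun _ => (0:ℝ)) := by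
        funext t
        simp only [kerf]
        split_ifs <;> simp_all <;> linarith
      rw [hind, integral_zero,
        abs_of_nonpos (by linarith), abs_of_nonneg (by linarith), abs_of_nonpos (by linarith)]
      ring

lemma kerf_prod_eq (y s u : ℝ) :
    (∫ t : ℝ, kerf y s t * kerf y u t) = (|s - y| + |u - y| - |s - u|) / 2 := by
  rcases le_total s u with h | h
  · exact kerf_prod_eq_aux y s u h
  · have := kerf_prod_eq_aux y u s h
    simp only [mul_comm] at this
    rw [this, abs_sub_comm u s]
    ring

lemma ind_uIcc_intble (s y : ℝ) :
    Integrable ((Set.uIcc s y).indicator (1 : ℝ → ℝ)) (volume : Measure ℝ) := by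
  rw [integrable_indicator_iff measurableSet_uIcc]
  refine integrableOn_const ?_
  apply ne_of_lt
  rw [Set.uIcc, Real.volume_Icc]
  exact ENNReal.ofReal_lt_top

lemma kerf_prod_intble (y s u : ℝ) :
    Integrable (fun t => kerf y s t * kerf y u t) (volume : Measure ℝ) := by
  have hm : Measurable (fun t => kerf y s t * kerf y u t) :=
    ((kerf_meas y).comp (measurable_const.prodMk measurable_id)).mul
      ((kerf_meas y).comp (measurable_const.prodMk measurable_id))
  apply Integrable.mono' (ind_uIcc_intble s y) hm.aestronglyMeasurable
  filter_upwards with t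
  rw [Real.norm_eq_abs, abs_mul]
  calc |kerf y s t| * |kerf y u t| ≤ (Set.uIcc s y).indicator (1 : ℝ → ℝ) t * 1 :=
        mul_le_mul (kerf_abs_le y s t) (kerf_abs_le_one y u t) (abs_nonneg _)
          (Set.indicator_nonneg (fun _ _ => by norm_num) t)
    _ = _ := mul_one _

lemma kerf_norm_int_le (y s u : ℝ) :
    (∫ t : ℝ, ‖kerf y s t * kerf y u t‖) ≤ |s - y| := by
  have hb : ∀ t : ℝ, ‖kerf y s t * kerf y u t‖ ≤ (Set.uIcc s y).indicator (1 : ℝ → ℝ) t := by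
    intro t
    rw [Real.norm_eq_abs, abs_mul]
    calc |kerf y s t| * |kerf y u t| ≤ (Set.uIcc s y).indicator (1 : ℝ → ℝ) t * 1 :=
          mul_le_mul (kerf_abs_le y s t) (kerf_abs_le_one y u t) (abs_nonneg _)
            (Set.indicator_nonneg (fun _ _ => by norm_num) t)
      _ = _ := mul_one _
  calc (∫ t : ℝ, ‖kerf y s t * kerf y u t‖)
      ≤ ∫ t : ℝ, (Set.uIcc s y).indicator (1 : ℝ → ℝ) t :=
        integral_mono (kerf_prod_intble y s u).norm (ind_uIcc_intble s y) hb
    _ = |s - y| := by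
        rw [integral_indicator_one measurableSet_uIcc, Set.uIcc, 
          Real.volume_real_Icc_of_le (min_le_max : min s y ≤ max s y)]
        rw [max_sub_min_eq_abs]
        exact abs_sub_comm y s

section R
variable {μ : Measure ℝ} [IsProbabilityMeasure μ] {F : ℝ → ℝ}

lemma W_intble (hInt : Integrable id μ) (y : ℝ) :
    Integrable (fun q : (ℝ × ℝ) × ℝ => kerf y q.1.1 q.2 * kerf y q.1.2 q.2)
      ((μ.prod μ).prod (volume : Measure ℝ)) := by
  have habs : Integrable (fun x => |x - y|) μ := by
    have := (hInt.sub (integrable_const y)).abs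
    simpa using this
  have hWm : Measurable (fun q : (ℝ × ℝ) × ℝ => kerf y q.1.1 q.2 * kerf y q.1.2 q.2) :=
    ((kerf_meas y).comp ((measurable_fst.fst).prodMk measurable_snd)).mul
      ((kerf_meas y).comp ((measurable_fst.snd).prodMk measurable_snd))
  rw [integrable_prod_iff hWm.aestronglyMeasurable]
  constructor
  · filter_upwards with p
    exact kerf_prod_intble y p.1 p.2
  · have hfst : Integrable (fun p : ℝ × ℝ => |p.1 - y|) (μ.prod μ) :=
      integrable_fst' habs
    apply Integrable.mono' hfst
    · exact (hWm.norm.stronglyMeasurable.integral_prod_right').aestronglyMeasurable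
    · filter_upwards with p
      rw [Real.norm_eq_abs, abs_of_nonneg (integral_nonneg (fun t => norm_nonneg _))]
      exact kerf_norm_int_le y p.1 p.2

lemma integral_fst'' (g : ℝ → ℝ) (hg : AEStronglyMeasurable g μ) {ν : Measure ℝ}
    [IsProbabilityMeasure ν] : ∫ p : ℝ × ℝ, g p.1 ∂(μ.prod ν) = ∫ x, g x ∂μ := by
  have hmap : (μ.prod ν).map Prod.fst = μ := by rw [Measure.map_fst_prod]; simp
  rw [show (∫ x, g x ∂μ) = ∫ x, g x ∂((μ.prod ν).map Prod.fst) from by rw [hmap],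
    integral_map measurable_fst.aemeasurable (by rw [hmap]; exact hg)]

lemma integral_snd'' (g : ℝ → ℝ) {ν : Measure ℝ} [IsProbabilityMeasure ν]
    (hg : AEStronglyMeasurable g ν) : ∫ p : ℝ × ℝ, g p.2 ∂(μ.prod ν) = ∫ x, g x ∂ν := by
  have hmap : (μ.prod ν).map Prod.snd = ν := by rw [Measure.map_snd_prod]; simp
  rw [show (∫ x, g x ∂ν) = ∫ x, g x ∂((μ.prod ν).map Prod.snd) from by rw [hmap],
    integral_map measurable_snd.aemeasurable (by rw [hmap]; exact hg)]

lemma rhs_eq (hAtomless : ∀ x : ℝ, μ {x} = 0) (hF : ∀ t, F t = (μ (Set.Iic t)).toReal)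
    (hInt : Integrable id μ) (hInt2 : Integrable (fun x => x * F x) μ) (y : ℝ) :
    (∫ t : ℝ, (F t - if y ≤ t then (1:ℝ) else 0) ^ 2)
      = (∫ x, |x - y| ∂μ) + (∫ x, x ∂μ) - 2 * ∫ x, x * F x ∂μ := by
  have habs : Integrable (fun x => |x - y|) μ := by
    have := (hInt.sub (integrable_const y)).abs
    simpa using this
  -- step 1 : F t - 1_{y ≤ t} = ∫ s, kerf y s t ∂μ
  have h1 : ∀ t : ℝ, F t - (if y ≤ t then (1:ℝ) else 0) = ∫ s, kerf y s t ∂μ := by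
    intro t
    have hi1 : Integrable (fun s : ℝ => if s ≤ t then (1:ℝ) else 0) μ := by
      have : (fun s : ℝ => if s ≤ t then (1:ℝ) else 0) = (Set.Iic t).indicator (1 : ℝ → ℝ) := by
        funext s; simp [Set.indicator_apply]
      rw [this, integrable_indicator_iff measurableSet_Iic]
      exact integrableOn_const (measure_lt_top μ _).ne
    unfold kerf
    rw [integral_sub hi1 (integrable_const _), integral_const, probReal_univ]
    have : (fun s : ℝ => if s ≤ t then (1:ℝ) else 0) = (Set.Iic t).indicator (1 : ℝ → ℝ) := by
      funext s; simp [Set.indicator_apply]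
    rw [this, integral_indicator_one measurableSet_Iic, Measure.real, ← hF]
    simp
  -- step 2 : square as double integral
  have h2 : ∀ t : ℝ, (F t - if y ≤ t then (1:ℝ) else 0) ^ 2
      = ∫ p : ℝ × ℝ, kerf y p.1 t * kerf y p.2 t ∂(μ.prod μ) := by
    intro t
    rw [h1 t, pow_two, integral_prod_mul (fun s => kerf y s t) (fun s => kerf y s t)]
  simp only [h2]
  -- step 3 : Fubini
  rw [← integral_integral_swap (f := fun (p : ℝ × ℝ) (t : ℝ) => kerf y p.1 t * kerf y p.2 t)
    (W_intble hInt y)]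
  -- step 4 : inner integral formula
  simp only [kerf_prod_eq]
  -- step 5 : split
  simp only [sub_div, add_div]
  have iA : Integrable (fun p : ℝ × ℝ => |p.1 - y| / 2) (μ.prod μ) :=
    (integrable_fst' habs).div_const 2
  have iB : Integrable (fun p : ℝ × ℝ => |p.2 - y| / 2) (μ.prod μ) :=
    (integrable_snd' habs).div_const 2
  have iC : Integrable (fun p : ℝ × ℝ => |p.1 - p.2| / 2) (μ.prod μ) := by
    apply Integrable.div_const
    apply Integrable.mono' ((integrable_fst' (ν := μ) hInt.abs).add (integrable_snd' hInt.abs))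
      ((measurable_fst.sub measurable_snd).abs).aestronglyMeasurable
    filter_upwards with p
    rw [Real.norm_eq_abs, abs_abs]
    exact (abs_sub _ _)
  have iAB : Integrable (fun p : ℝ × ℝ => |p.1 - y| / 2 + |p.2 - y| / 2) (μ.prod μ) := iA.add iB
  rw [integral_sub iAB iC, integral_add iA iB, integral_div, integral_div, integral_div,
    integral_fst'' _ habs.aestronglyMeasurable, integral_snd'' _ habs.aestronglyMeasurable,
    ESU hAtomless hF hInt hInt2]
  ring

end R

/-- The symmetrized kernel `h̃(a, b) = (1/2)·(a·1_{a > b} + b·1_{b > a})`. -/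
noncomputable def htilde (a b : ℝ) : ℝ :=
  (1 / 2) * (a * (if a > b then (1 : ℝ) else 0) + b * (if b > a then (1 : ℝ) else 0))

lemma htilde_abs_le (a b : ℝ) : |htilde a b| ≤ |a| + |b| := by
  unfold htilde
  split_ifs <;>
    simp only [mul_one, mul_zero, add_zero, zero_add] <;>
    try rw [abs_mul, abs_of_nonneg (by norm_num : (0:ℝ) ≤ 1/2)]
  · nlinarith [abs_add_le a b, abs_nonneg a, abs_nonneg b, abs_nonneg (a + b)]
  · nlinarith [abs_nonneg a, abs_nonneg b]
  · nlinarith [abs_nonneg a, abs_nonneg b]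
  · simp only [mul_zero, zero_add, add_zero, abs_zero]
    positivity

lemma htilde_pair_meas : Measurable (fun p : ℝ × ℝ => htilde p.1 p.2) := by
  unfold htilde
  exact measurable_const.mul ((measurable_fst.mul meas_ind_lt).add
    (measurable_snd.mul meas_ind_lt'))

/-- The U-statistic PWM estimator of the CRPS is unbiased:
`E[(1/M)·Σᵢ |Yᵢ − y| + (1/M)·Σᵢ Yᵢ − (2/(M(M−1)))·Σ_{i ≠ j} h̃(Yᵢ, Yⱼ)] = CRPS(F, y)`. -/
theorem u_statistic_crps_unbiased
    {Ω : Type*} [MeasurableSpace Ω] (P : Measure Ω) [IsProbabilityMeasure P]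
    (M : ℕ) (hM : 2 ≤ M)
    (Y : Fin M → Ω → ℝ) (hYm : ∀ i, Measurable (Y i))
    (hIndep : ProbabilityTheory.iIndepFun Y P)
    (μ : Measure ℝ) (hmap : ∀ i, P.map (Y i) = μ)
    (hAtomless : ∀ x : ℝ, μ {x} = 0)
    (F : ℝ → ℝ) (hF : ∀ t, F t = (μ (Set.Iic t)).toReal)
    (hInt : Integrable id μ)
    (hInt2 : Integrable (fun x => x * F x) μ)
    (y : ℝ) :
    (∫ ω, ((1 / (M : ℝ)) * ∑ i : Fin M, |Y i ω - y|
        + (1 / (M : ℝ)) * ∑ i : Fin M, Y i ω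
        - (2 / ((M : ℝ) * ((M : ℝ) - 1)))
            * ∑ p ∈ Finset.univ.offDiag, htilde (Y p.1 ω) (Y p.2 ω)) ∂P) =
      ∫ t : ℝ, (F t - if y ≤ t then (1 : ℝ) else 0) ^ 2 := by
  haveI : IsProbabilityMeasure μ := by
    rw [← hmap ⟨0, by omega⟩]
    exact Measure.isProbabilityMeasure_map (hYm _).aemeasurable
  have hYint : ∀ i, Integrable (Y i) P := by
    intro i
    have h : Integrable id (P.map (Y i)) := by rw [hmap i]; exact hInt
    exact (integrable_map_measure (by rw [hmap i]; exact hInt.aestronglyMeasurable)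
      (hYm i).aemeasurable).mp h
  have habsint : ∀ i, Integrable (fun ω => |Y i ω - y|) P :=
    fun i => ((hYint i).sub (integrable_const y)).abs
  have habsval : ∀ i, (∫ ω, |Y i ω - y| ∂P) = ∫ x, |x - y| ∂μ := by
    intro i
    rw [← hmap i]
    exact (integral_map (f := fun x => |x - y|) (hYm i).aemeasurable
      (by exact ((measurable_id.sub measurable_const).abs).aestronglyMeasurable)).symm
  have hval : ∀ i, (∫ ω, Y i ω ∂P) = ∫ x, x ∂μ := by
    intro i
    rw [← hmap i]
    exact (integral_map (f := fun x => x) (hYm i).aemeasurable (by exact measurable_id.aestronglyMeasurable)).symm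
  have hHint : ∀ i j, Integrable (fun ω => htilde (Y i ω) (Y j ω)) P := by
    intro i j
    apply Integrable.mono' ((hYint i).abs.add (hYint j).abs)
      ((htilde_pair_meas.comp ((hYm i).prodMk (hYm j))).aestronglyMeasurable)
    filter_upwards with ω
    rw [Real.norm_eq_abs]
    exact htilde_abs_le _ _
  have hHval : ∀ i j, i ≠ j → (∫ ω, htilde (Y i ω) (Y j ω) ∂P) = ∫ x, x * F x ∂μ := by
    intro i j hij
    have hpair : P.map (fun ω => (Y i ω, Y j ω)) = μ.prod μ := by
      have hindep := hIndep.indepFun hij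
      rw [ProbabilityTheory.indepFun_iff_map_prod_eq_prod_map_map (hYm i).aemeasurable
        (hYm j).aemeasurable] at hindep
      rw [hindep, hmap i, hmap j]
    have h := integral_map (μ := P) (φ := fun ω => (Y i ω, Y j ω))
      (f := fun p : ℝ × ℝ => htilde p.1 p.2)
      ((hYm i).prodMk (hYm j)).aemeasurable (by exact htilde_pair_meas.aestronglyMeasurable)
    rw [hpair] at h
    rw [← h]
    have := htilde_int (μ := μ) hAtomless hF hInt
    unfold htilde
    convert this using 2
  -- integrability of the three pieces
  have intA : Integrable (fun ω => (1 / (M : ℝ)) * ∑ i : Fin M, |Y i ω - y|) P :=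
    (integrable_finset_sum _ (fun i _ => habsint i)).const_mul _
  have intB : Integrable (fun ω => (1 / (M : ℝ)) * ∑ i : Fin M, Y i ω) P :=
    (integrable_finset_sum _ (fun i _ => hYint i)).const_mul _
  have intC : Integrable (fun ω => (2 / ((M : ℝ) * ((M : ℝ) - 1)))
      * ∑ p ∈ Finset.univ.offDiag, htilde (Y p.1 ω) (Y p.2 ω)) P :=
    (integrable_finset_sum _ (fun p _ => hHint p.1 p.2)).const_mul _
  have intAB : Integrable (fun ω => (1 / (M : ℝ)) * ∑ i : Fin M, |Y i ω - y|
      + (1 / (M : ℝ)) * ∑ i : Fin M, Y i ω) P := intA.add intB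
  rw [integral_sub intAB intC, integral_add intA intB, integral_const_mul, integral_const_mul,
    integral_const_mul, integral_finset_sum _ (fun i _ => habsint i),
    integral_finset_sum _ (fun i _ => hYint i),
    integral_finset_sum _ (fun p _ => hHint p.1 p.2)]
  simp only [habsval, hval]
  rw [Finset.sum_congr rfl (fun p hp => hHval p.1 p.2 (Finset.mem_offDiag.mp hp).2.2),
    Finset.sum_const, Finset.sum_const, Finset.sum_const, Finset.offDiag_card,
    Finset.card_univ, Fintype.card_fin,
    rhs_eq hAtomless hF hInt hInt2 y]
  have hMM : M ≤ M * M := Nat.le_mul_of_pos_left M (by omega)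
  have hM1 : (2:ℝ) ≤ (M:ℝ) := by exact_mod_cast hM
  have hMne : (M:ℝ) ≠ 0 := by linarith
  have hM1ne : (M:ℝ) - 1 ≠ 0 := by intro h; nlinarith
  simp only [nsmul_eq_mul]
  push_cast [Nat.cast_sub hMM]
  field_simp
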